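/- Let S be a commutative semiring and let 𝔭 be a z-ideal of S. If 𝔞 and 𝔟 are z-ideals of S with 𝔞·𝔟 ⊆ 𝔭, then 𝔞 ∩ 𝔟 ⊆ 𝔭. -/
import Mathlib

/-- An ideal `I` of a commutative semiring is a *z-ideal* if for every `x ∈ I`,
the intersection of all maximal ideals containing `x` is contained in `I`. -/
def IsZIdeal {S : Type*} [CommSemiring S] (I : Ideal S) : Prop :=
  ∀ x ∈ I, sInf {m : Ideal S | m.IsMaximal ∧ x ∈ m} ≤ I

theorem zIdeal_mul_le_imp_inf_le {S : Type*} [CommSemiring S] (p : Ideal S) (hp : IsZIdeal p)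
    (a b : Ideal S) (ha : IsZIdeal a) (hb : IsZIdeal b) (h : a * b ≤ p) : a ⊓ b ≤ p := by
  intro x hx
  have hx2 : x * x ∈ p := h (Ideal.mul_mem_mul hx.1 hx.2)
  refine hp (x * x) hx2 ?_
  refine (Submodule.mem_sInf).2 ?_
  intro m hm
  have := hm.1.isPrime
  exact (this.mem_or_mem hm.2).elim id id
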